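/- Let β : F → P* be the Magnus representation of the free group F into the units of the truncated noncommutative power series ring P, and let Δ be the ideal of power series with zero constant term. If w₁, w₂ ∈ F with β(w₁) − 1 ∈ Δʳ and β(w₂) − 1 ∈ Δˢ, then β([w₁,w₂]) − 1 ∈ Δ^{r+s}. -/

import Mathlib

/-- The relation identifying the squares of the generators with `0`. -/
def MagnusRel (n : ℕ) : FreeAlgebra ℤ (Fin n) → FreeAlgebra ℤ (Fin n) → Prop :=
  fun a b => ∃ j : Fin n, a = FreeAlgebra.ι ℤ j * FreeAlgebra.ι ℤ j ∧ b = 0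

/-- The ring `P = ℤ⟨x₁,…,xₙ⟩ / (x₁², …, xₙ²)`.  (Since `xⱼ² = 0`, the Magnus
representation `aⱼ ↦ 1 + xⱼ` takes values in this quotient; it is the image of the
corresponding power series ring `ℤ⟨⟨x₁,…,xₙ⟩⟩/(xⱼ²)` relevant to the statements below.) -/
abbrev MagnusRing (n : ℕ) := RingQuot (MagnusRel n)

/-- The indeterminate `xⱼ` in `MagnusRing n`. -/
noncomputable def magnusX {n : ℕ} (j : Fin n) : MagnusRing n :=
  RingQuot.mkRingHom (MagnusRel n) (FreeAlgebra.ι ℤ j)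

/-- The augmentation `ρ : P → ℤ` sending each `xⱼ` to `0`. -/
noncomputable def magnusAug (n : ℕ) : MagnusRing n →+* ℤ :=
  RingQuot.lift ⟨((FreeAlgebra.lift ℤ (fun _ : Fin n => (0 : ℤ))) : _).toRingHom, by
    rintro a b ⟨j, rfl, rfl⟩
    simp⟩

/-- The fundamental ideal `Δ = ker ρ`, viewed as a `ℤ`-submodule of `P` (so that its
powers `Δᵏ` are the usual powers of the two-sided ideal `Δ`). -/
noncomputable def magnusDelta (n : ℕ) : Submodule ℤ (MagnusRing n) :=
  (RingHom.ker (magnusAug n)).restrictScalars ℤ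


lemma magnusDelta_pow_mul_left {n k : ℕ} (hk : k ≠ 0) (x : MagnusRing n)
    {z : MagnusRing n} (hz : z ∈ magnusDelta n ^ k) : x * z ∈ magnusDelta n ^ k := by
  obtain ⟨m, rfl⟩ := Nat.exists_eq_succ_of_ne_zero hk
  rw [show magnusDelta n ^ m.succ = magnusDelta n * magnusDelta n ^ m by
    rcases Nat.eq_zero_or_pos m with h | h
    · subst h; rw [Submodule.pow_succ, Submodule.pow_zero, Submodule.one_mul]; exact (Submodule.mul_one _).symm
    · exact Submodule.pow_succ' _ h.ne'] at hz ⊢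
  refine Submodule.mul_induction_on hz (fun d hd e he => ?_) (fun a b ha hb => ?_)
  · rw [← mul_assoc]
    refine Submodule.mul_mem_mul ?_ he
    simp only [magnusDelta, Submodule.restrictScalars_mem, RingHom.mem_ker] at hd ⊢
    rw [map_mul, hd, mul_zero]
  · rw [mul_add]; exact add_mem ha hb

lemma magnusDelta_pow_add' {n : ℕ} (M : Submodule ℤ (MagnusRing n)) (a b : ℕ) :
    M ^ (a + b) = M ^ a * M ^ b := by
  rcases Nat.eq_zero_or_pos b with h | h
  · subst h; rw [Submodule.pow_zero, Nat.add_zero]; exact (Submodule.mul_one _).symm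
  · exact Submodule.pow_add M h.ne'

/-- If `β(w₁) − 1 ∈ Δʳ` and `β(w₂) − 1 ∈ Δˢ`, then `β([w₁,w₂]) − 1 ∈ Δ^{r+s}`,
where `β` is the Magnus representation `aⱼ ↦ 1 + xⱼ` and `[w₁,w₂] = w₁⁻¹w₂⁻¹w₁w₂`. -/
theorem magnus_commutator_deeper {n : ℕ} (β : FreeGroup (Fin n) →* (MagnusRing n)ˣ)
    (hβ : ∀ j : Fin n,
      ((β (FreeGroup.of j) : (MagnusRing n)ˣ) : MagnusRing n) = 1 + magnusX j)
    (w₁ w₂ : FreeGroup (Fin n)) (r s : ℕ)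
    (h₁ : ((β w₁ : (MagnusRing n)ˣ) : MagnusRing n) - 1 ∈ magnusDelta n ^ r)
    (h₂ : ((β w₂ : (MagnusRing n)ˣ) : MagnusRing n) - 1 ∈ magnusDelta n ^ s) :
    ((β (w₁⁻¹ * w₂⁻¹ * w₁ * w₂) : (MagnusRing n)ˣ) : MagnusRing n) - 1 ∈
      magnusDelta n ^ (r + s) := by
  set U := β w₁ with hU
  set V := β w₂ with hV
  have hc : ((β (w₁⁻¹ * w₂⁻¹ * w₁ * w₂) : (MagnusRing n)ˣ) : MagnusRing n)
      = ((U⁻¹ * V⁻¹ * U * V : (MagnusRing n)ˣ) : MagnusRing n) := by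
    simp [map_mul, map_inv, hU, hV]
  have key : ((U : MagnusRing n) * V - V * U) ∈ magnusDelta n ^ (r + s) := by
    have e : ((U : MagnusRing n) * V - V * U)
        = ((U : MagnusRing n) - 1) * ((V : MagnusRing n) - 1)
          - ((V : MagnusRing n) - 1) * ((U : MagnusRing n) - 1) := by
      simp only [mul_sub, sub_mul, mul_one, one_mul]
      abel
    rw [e]
    refine sub_mem ?_ ?_
    · rw [magnusDelta_pow_add']; exact Submodule.mul_mem_mul h₁ h₂
    · rw [add_comm, magnusDelta_pow_add']; exact Submodule.mul_mem_mul h₂ h₁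
  rcases Nat.eq_zero_or_pos (r + s) with h0 | hpos
  · -- r = s = 0 : u and v are central, so the commutator is 1
    obtain ⟨hr, hs⟩ := Nat.add_eq_zero.mp h0
    subst hr; subst hs
    rw [Submodule.pow_zero] at h₁ h₂
    obtain ⟨a, ha⟩ := h₁
    obtain ⟨b, hb⟩ := h₂
    have hu : (U : MagnusRing n) = (a : MagnusRing n) + 1 := by
      have := ha
      simp only [LinearMap.toSpanSingleton_apply, zsmul_eq_mul, mul_one] at this
      exact eq_add_of_sub_eq this.symm
    have hv : (V : MagnusRing n) = (b : MagnusRing n) + 1 := by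
      have := hb
      simp only [LinearMap.toSpanSingleton_apply, zsmul_eq_mul, mul_one] at this
      exact eq_add_of_sub_eq this.symm
    have hcomm : (U : MagnusRing n) * V = V * U := by
      rw [hu, hv]
      exact ((Int.cast_commute a ((b : MagnusRing n) + 1)).add_left
        (Commute.one_left _)).eq
    have hUV : U * V = V * U := Units.ext (by push_cast; exact hcomm)
    have h1 : U⁻¹ * V⁻¹ * U * V = 1 := by
      rw [mul_assoc, mul_assoc, hUV, ← mul_assoc]
      group
    rw [hc, h1]
    simp
  · have g1 : U⁻¹ * V⁻¹ * (U * V) = U⁻¹ * V⁻¹ * U * V := (mul_assoc _ _ _).symm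
    have g2 : U⁻¹ * V⁻¹ * (V * U) = 1 := by group
    have e : ((β (w₁⁻¹ * w₂⁻¹ * w₁ * w₂) : (MagnusRing n)ˣ) : MagnusRing n) - 1
        = ((U⁻¹ * V⁻¹ : (MagnusRing n)ˣ) : MagnusRing n)
            * ((U : MagnusRing n) * V - V * U) := by
      rw [hc, mul_sub]
      simp only [← Units.val_mul]
      rw [g1, g2, Units.val_one]
    rw [e]
    exact magnusDelta_pow_mul_left hpos.ne' _ key
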